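/- Let ψ̄, b̄ : (−∞, t₁] → ℝ be continuous with ψ̄(t) → ψ₀ > 0 as t → −∞. If Ū : (−∞, t₁] → ℝ is a differentiable solution of Ū' + ψ̄(t)Ū + b̄(t)Ū² = 0 with Ū(t) → 0 as t → −∞ and b̄(t)Ū(t) → 0 as t → −∞, then Ū ≡ 0. -/

import Mathlib

open Filter Set

theorem stmt_15 (t1 ψ0 : ℝ) (hψ0 : 0 < ψ0)
    (ψ b U : ℝ → ℝ)
    (hψc : ContinuousOn ψ (Set.Iic t1)) (hbc : ContinuousOn b (Set.Iic t1))
    (hψlim : Filter.Tendsto ψ Filter.atBot (nhds ψ0))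
    (hU : ∀ t ≤ t1, HasDerivAt U (-(ψ t * U t + b t * U t ^ 2)) t)
    (hUlim : Filter.Tendsto U Filter.atBot (nhds 0))
    (hbUlim : Filter.Tendsto (fun t => b t * U t) Filter.atBot (nhds 0)) :
    ∀ t ≤ t1, U t = 0 := by
  have hsum : Tendsto (fun t => ψ t + b t * U t) atBot (nhds (ψ0 + 0)) := hψlim.add hbUlim
  have hev : ∀ᶠ t in atBot, ψ0 / 2 < ψ t + b t * U t :=
    hsum.eventually (eventually_gt_nhds (by linarith))
  obtain ⟨a, ha⟩ := eventually_atBot.mp hev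
  set t2 := min a t1 with ht2
  have ht2a : t2 ≤ a := min_le_left _ _
  have ht2t1 : t2 ≤ t1 := min_le_right _ _
  set u := fun t => U t ^ 2 with hu
  have hUcont : ContinuousOn U (Iic t1) := fun x hx =>
    ((hU x hx).continuousAt).continuousWithinAt
  have hucont : ContinuousOn u (Iic t2) :=
    (hUcont.mono (Iic_subset_Iic.mpr ht2t1)).pow 2
  have hud : ∀ x ≤ t1, HasDerivAt u (2 * U x ^ 1 * (-(ψ x * U x + b x * U x ^ 2))) x :=
    fun x hx => (hU x hx).pow 2
  have hanti : AntitoneOn u (Iic t2) := by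
    apply antitoneOn_of_deriv_nonpos (convex_Iic t2) hucont
    · intro x hx
      rw [interior_Iic] at hx
      exact (hud x (le_of_lt (lt_of_lt_of_le hx ht2t1))).differentiableAt.differentiableWithinAt
    intro x hx
    rw [interior_Iic] at hx
    have hx1 : x ≤ t1 := le_of_lt (lt_of_lt_of_le hx ht2t1)
    rw [(hud x hx1).deriv]
    have h1 : ψ0 / 2 < ψ x + b x * U x := ha x (le_of_lt (lt_of_lt_of_le hx ht2a))
    nlinarith [sq_nonneg (U x)]
  have hzero : ∀ t ≤ t2, U t = 0 := by
    intro t ht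
    have h1 : u t ≤ 0 := by
      have hl : Tendsto u atBot (nhds 0) := by
        have := hUlim.pow 2
        simpa [hu] using this
      refine ge_of_tendsto hl ?_
      filter_upwards [eventually_le_atBot t] with s hs
      exact hanti (le_trans hs ht) ht hs
    simp only [hu] at h1
    nlinarith [sq_nonneg (U t)]
  intro t ht
  by_cases hc : t ≤ t2
  · exact hzero t hc
  push_neg at hc
  -- Grönwall on [t2, t1]
  have hsub : Icc t2 t1 ⊆ Iic t1 := fun x hx => hx.2
  have hg : ContinuousOn (fun x => |ψ x| + |b x * U x|) (Icc t2 t1) := by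
    apply ContinuousOn.add
    · exact (hψc.mono hsub).abs
    · exact ((hbc.mono hsub).mul (hUcont.mono hsub)).abs
  obtain ⟨C, hC⟩ := isCompact_Icc.exists_bound_of_continuousOn hg
  have key : ∀ s ∈ Icc t2 t1, ‖U s‖ ≤ gronwallBound 0 C 0 (s - t2) := by
    apply norm_le_gronwallBound_of_norm_deriv_right_le
      (f := U) (f' := fun x => -(ψ x * U x + b x * U x ^ 2))
    · exact hUcont.mono hsub
    · intro x hx
      exact (hU x (le_of_lt hx.2)).hasDerivWithinAt
    · simp [hzero t2 le_rfl]
    · intro x hx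
      have hb : ‖(|ψ x| + |b x * U x|)‖ ≤ C := hC x ⟨hx.1, le_of_lt hx.2⟩
      have hb' : |ψ x| + |b x * U x| ≤ C := le_trans (le_abs_self _) hb
      have h2 : ‖-(ψ x * U x + b x * U x ^ 2)‖ ≤ (|ψ x| + |b x * U x|) * ‖U x‖ := by
        rw [Real.norm_eq_abs, Real.norm_eq_abs, abs_neg]
        have : ψ x * U x + b x * U x ^ 2 = (ψ x + b x * U x) * U x := by ring
        rw [this, abs_mul]
        exact mul_le_mul_of_nonneg_right (abs_add_le _ _) (abs_nonneg _)
      calc ‖-(ψ x * U x + b x * U x ^ 2)‖ ≤ (|ψ x| + |b x * U x|) * ‖U x‖ := h2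
        _ ≤ C * ‖U x‖ := mul_le_mul_of_nonneg_right hb' (norm_nonneg _)
        _ = C * ‖U x‖ + 0 := by ring
  have := key t ⟨le_of_lt hc, ht⟩
  rw [gronwallBound_ε0] at this
  simp at this
  exact this
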